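/- Let r : R^n → R be convex, f : R^n → R differentiable with ∇f Lipschitz with constant L_g, and c : R^n → R^m differentiable with Jacobian Lipschitz with constant L_J (in the sense that ‖c(x+ts) - c(x) - t J(x)s‖₂ ≤ (L_J/2) t² ‖s‖₂²). Then for any τ > 0, x, s ∈ R^n, the directional derivative of Φ_τ(x) := τ(f(x)+r(x)) + ‖c(x)‖₂ at x in direction s satisfies D_{Φ_τ}(x,s) ≤ τ(∇f(x)^T s + r(x+s) - r(x)) + ‖c(x) + J(x)s‖₂ - ‖c(x)‖₂. -/

import Mathlib

open scoped RealInnerProductSpace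

set_option maxHeartbeats 1000000 in
/-- bound on the directional derivative of the ℓ₂ merit function. -/
theorem merit_directional_derivative_bound
    {m n : ℕ}
    (f : EuclideanSpace ℝ (Fin n) → ℝ) (gf : EuclideanSpace ℝ (Fin n) → EuclideanSpace ℝ (Fin n))
    (r : EuclideanSpace ℝ (Fin n) → ℝ)
    (c : EuclideanSpace ℝ (Fin n) → EuclideanSpace ℝ (Fin m))
    (Jx : Matrix (Fin m) (Fin n) ℝ)
    (Lg LJ : ℝ) (hLg : 0 < Lg) (hLJ : 0 < LJ)
    (τ : ℝ) (hτ : 0 < τ)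
    (x s : EuclideanSpace ℝ (Fin n))
    (hr : ConvexOn ℝ Set.univ r)
    (hgrad : ∀ y, HasGradientAt f (gf y) y)
    (hgradLip : ∀ y z : EuclideanSpace ℝ (Fin n), ‖gf y - gf z‖ ≤ Lg * ‖y - z‖)
    (hJLip : ∀ t : ℝ, 0 ≤ t → t ≤ 1 →
      ‖c (x + t • s) - c x - t • Matrix.toEuclideanLin Jx s‖ ≤ (LJ / 2) * t ^ 2 * ‖s‖ ^ 2)
    (D : ℝ)
    (hD : Filter.Tendsto
      (fun t : ℝ => ((τ * (f (x + t • s) + r (x + t • s)) + ‖c (x + t • s)‖)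
        - (τ * (f x + r x) + ‖c x‖)) / t)
      (nhdsWithin 0 (Set.Ioi 0)) (nhds D)) :
    D ≤ τ * (⟪gf x, s⟫ + r (x + s) - r x) + ‖c x + Matrix.toEuclideanLin Jx s‖ - ‖c x‖ := by
  set J := Matrix.toEuclideanLin Jx s with hJ
  -- derivative of t ↦ f (x + t • s) at 0
  have hline : HasDerivAt (fun t : ℝ => x + t • s) s 0 := by
    simpa using ((hasDerivAt_id (0:ℝ)).smul_const s).const_add x
  have hfd : HasDerivAt (fun t : ℝ => f (x + t • s)) ⟪gf x, s⟫ 0 := by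
    have hx : HasFDerivAt f ((InnerProductSpace.toDual ℝ _) (gf x)) (x + (0:ℝ) • s) := by
      simpa using (hgrad x).hasFDerivAt
    have h := hx.comp_hasDerivAt 0 hline
    simpa [Function.comp_def] using h
  have hq : Filter.Tendsto (fun t : ℝ => (f (x + t • s) - f x) / t)
      (nhdsWithin 0 (Set.Ioi 0)) (nhds ⟪gf x, s⟫) := by
    have h1 := hasDerivAt_iff_tendsto_slope.mp hfd
    have h2 := h1.mono_left (nhdsWithin_mono 0 (fun t ht => ne_of_gt ht))
    refine h2.congr fun t => ?_
    simp [slope_def_field]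
  have htz : Filter.Tendsto (fun t : ℝ => (LJ/2) * t * ‖s‖^2)
      (nhdsWithin 0 (Set.Ioi 0)) (nhds 0) := by
    have : Continuous fun t : ℝ => (LJ/2) * t * ‖s‖^2 := by continuity
    have h := (this.tendsto 0).mono_left
      (nhdsWithin_le_nhds (s := Set.Ioi (0:ℝ)) (a := (0:ℝ)))
    simpa using h
  have hF : Filter.Tendsto (fun t : ℝ =>
      τ * ((f (x + t • s) - f x) / t) + (τ * (r (x + s) - r x) + (‖c x + J‖ - ‖c x‖))
        + (LJ/2) * t * ‖s‖^2)
      (nhdsWithin 0 (Set.Ioi 0))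
      (nhds (τ * ⟪gf x, s⟫ + (τ * (r (x + s) - r x) + (‖c x + J‖ - ‖c x‖)) + 0)) :=
    (((hq.const_mul τ).add_const _).add htz)
  have hEv : ∀ᶠ t in nhdsWithin 0 (Set.Ioi 0),
      ((τ * (f (x + t • s) + r (x + t • s)) + ‖c (x + t • s)‖)
        - (τ * (f x + r x) + ‖c x‖)) / t
      ≤ τ * ((f (x + t • s) - f x) / t) + (τ * (r (x + s) - r x) + (‖c x + J‖ - ‖c x‖))
        + (LJ/2) * t * ‖s‖^2 := by
    filter_upwards [Ioo_mem_nhdsGT_of_mem (show (0:ℝ) ∈ Set.Ico 0 1 by constructor <;> norm_num)]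
      with t ht
    obtain ⟨ht0, ht1⟩ := ht
    -- convexity bound for r
    have hrB : r (x + t • s) - r x ≤ t * (r (x + s) - r x) := by
      have h := hr.2 (Set.mem_univ x) (Set.mem_univ (x + s))
        (sub_nonneg.mpr ht1.le) ht0.le (by ring)
      have hpt : (1 - t) • x + t • (x + s) = x + t • s := by
        module
      rw [hpt, smul_eq_mul, smul_eq_mul] at h
      nlinarith [h]
    -- norm bound for c
    have hc1 : ‖c (x + t • s)‖ ≤ ‖c x + t • J‖ + (LJ/2) * t^2 * ‖s‖^2 := by
      have h := hJLip t ht0.le ht1.le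
      calc ‖c (x + t • s)‖ = ‖(c (x + t • s) - c x - t • J) + (c x + t • J)‖ := by
            congr 1; abel
        _ ≤ ‖c (x + t • s) - c x - t • J‖ + ‖c x + t • J‖ := norm_add_le _ _
        _ ≤ (LJ/2) * t^2 * ‖s‖^2 + ‖c x + t • J‖ := by gcongr
        _ = ‖c x + t • J‖ + (LJ/2) * t^2 * ‖s‖^2 := by ring
    have hc2 : ‖c x + t • J‖ ≤ (1 - t) * ‖c x‖ + t * ‖c x + J‖ := by
      have hpt : c x + t • J = (1 - t) • c x + t • (c x + J) := by module
      rw [hpt]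
      calc ‖(1 - t) • c x + t • (c x + J)‖ ≤ ‖(1 - t) • c x‖ + ‖t • (c x + J)‖ :=
            norm_add_le _ _
        _ = (1 - t) * ‖c x‖ + t * ‖c x + J‖ := by
            rw [norm_smul, norm_smul, Real.norm_eq_abs, Real.norm_eq_abs,
              abs_of_nonneg (by linarith), abs_of_nonneg ht0.le]
    have hcB : ‖c (x + t • s)‖ - ‖c x‖ ≤ t * (‖c x + J‖ - ‖c x‖) + (LJ/2) * t^2 * ‖s‖^2 := by
      nlinarith [hc1, hc2]
    have hsplit : ((τ * (f (x + t • s) + r (x + t • s)) + ‖c (x + t • s)‖)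
        - (τ * (f x + r x) + ‖c x‖)) / t
        = τ * ((f (x + t • s) - f x) / t) + (τ * (r (x + t • s) - r x)) / t
          + (‖c (x + t • s)‖ - ‖c x‖) / t := by
      field_simp
      ring
    rw [hsplit]
    have t2 : (τ * (r (x + t • s) - r x)) / t ≤ τ * (r (x + s) - r x) := by
      rw [div_le_iff₀ ht0]
      calc τ * (r (x + t • s) - r x) ≤ τ * (t * (r (x + s) - r x)) :=
            mul_le_mul_of_nonneg_left hrB hτ.le
        _ = τ * (r (x + s) - r x) * t := by ring
    have t3 : (‖c (x + t • s)‖ - ‖c x‖) / t ≤ (‖c x + J‖ - ‖c x‖) + (LJ/2) * t * ‖s‖^2 := by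
      rw [div_le_iff₀ ht0]
      calc ‖c (x + t • s)‖ - ‖c x‖ ≤ t * (‖c x + J‖ - ‖c x‖) + (LJ/2) * t^2 * ‖s‖^2 := hcB
        _ = ((‖c x + J‖ - ‖c x‖) + (LJ/2) * t * ‖s‖^2) * t := by ring
    linarith
  have := le_of_tendsto_of_tendsto hD hF hEv
  linarith [this]
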